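/- Let γ ∈ [−2,1] and f : ℝ³ → ℝ measurable. For a_{ij}(v) = |v|^{γ+2}(δ_{ij} − v_i v_j/|v|²) and any θ > γ + 4 + 3/2, there is a constant C > 0 such that for all v ∈ ℝ³ and all indices i,j: |(a_{ij} * f)(v) v_i v_j| ≤ C ⟨v⟩^{γ+2} ‖⟨·⟩^θ f‖_{L²(ℝ³)} (with summation over i,j on the left), provided the right-hand side is finite. -/

import Mathlib

open MeasureTheory Real

noncomputable section

abbrev R3 := EuclideanSpace ℝ (Fin 3)

def jb (v : R3) : ℝ := Real.sqrt (1 + ‖v‖ ^ 2)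

def aMat (γ : ℝ) (v : R3) (i j : Fin 3) : ℝ :=
  ‖v‖ ^ (γ + 2) * ((if i = j then (1:ℝ) else 0) - v i * v j / ‖v‖ ^ 2)

lemma jb_one_le (v : R3) : 1 ≤ jb v := by
  have h1 := Real.sq_sqrt (show (0:ℝ) ≤ 1 + ‖v‖ ^ 2 by positivity)
  have h2 := Real.sqrt_nonneg (1 + ‖v‖ ^ 2)
  rw [jb]; nlinarith [sq_nonneg ‖v‖]

lemma jb_pos (v : R3) : 0 < jb v := lt_of_lt_of_le one_pos (jb_one_le v)

lemma jb_sq (v : R3) : jb v ^ 2 = 1 + ‖v‖ ^ 2 := Real.sq_sqrt (by positivity)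

lemma norm_le_jb (v : R3) : ‖v‖ ≤ jb v := by
  rw [jb, show ‖v‖ = Real.sqrt (‖v‖^2) by rw [Real.sqrt_sq (norm_nonneg v)]]
  exact Real.sqrt_le_sqrt (by nlinarith [Real.sq_sqrt (sq_nonneg ‖v‖)])

lemma norm_sq_eq (v : R3) : ‖v‖ ^ 2 = ∑ i, v i ^ 2 := by
  rw [EuclideanSpace.norm_eq, Real.sq_sqrt (by positivity)]
  simp [Real.norm_eq_abs, sq_abs]

lemma coord_abs_le_norm (v : R3) (i : Fin 3) : |v i| ≤ ‖v‖ := by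
  have h1 : v i ^ 2 ≤ ‖v‖ ^ 2 := by
    rw [norm_sq_eq]
    exact Finset.single_le_sum (f := fun j => v j ^ 2) (fun j _ => sq_nonneg _)
      (Finset.mem_univ i)
  calc |v i| = Real.sqrt (v i ^ 2) := (Real.sqrt_sq_eq_abs _).symm
    _ ≤ Real.sqrt (‖v‖ ^ 2) := Real.sqrt_le_sqrt h1
    _ = ‖v‖ := Real.sqrt_sq (norm_nonneg v)

lemma aMat_symm (γ : ℝ) (z : R3) (i j : Fin 3) : aMat γ z i j = aMat γ z j i := by
  simp only [aMat, eq_comm (a := i)]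
  ring_nf

lemma aMat_abs_le (γ : ℝ) (z : R3) (i j : Fin 3) : |aMat γ z i j| ≤ ‖z‖ ^ (γ + 2) := by
  rw [aMat, abs_mul, abs_of_nonneg (Real.rpow_nonneg (norm_nonneg z) _)]
  have hb : |(if i = j then (1:ℝ) else 0) - z i * z j / ‖z‖ ^ 2| ≤ 1 := by
    rcases eq_or_ne z 0 with hz | hz
    · subst hz; simp; split <;> norm_num
    · have hn : (0:ℝ) < ‖z‖ ^ 2 := pow_pos (norm_pos_iff.mpr hz) 2
      have hi := coord_abs_le_norm z i
      have hj := coord_abs_le_norm z j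
      have habs : |z i * z j| ≤ ‖z‖ ^ 2 := by
        rw [abs_mul]; nlinarith [abs_nonneg (z i), abs_nonneg (z j), norm_nonneg z]
      split
      · have h0 : 0 ≤ z i * z j / ‖z‖ ^ 2 := by
          rename_i h; subst h; exact div_nonneg (mul_self_nonneg _) hn.le
        have h1 : z i * z j / ‖z‖ ^ 2 ≤ 1 := by
          rw [div_le_one hn]
          calc z i * z j ≤ |z i * z j| := le_abs_self _
            _ ≤ ‖z‖ ^ 2 := habs
        rw [abs_le]; constructor <;> linarith
      · rw [zero_sub, abs_neg, abs_div, abs_of_nonneg hn.le, div_le_one hn]; exact habs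
  calc ‖z‖ ^ (γ+2) * |_| ≤ ‖z‖ ^ (γ+2) * 1 :=
        mul_le_mul_of_nonneg_left hb (Real.rpow_nonneg (norm_nonneg z) _)
    _ = _ := mul_one _

lemma aMat_row (γ : ℝ) (z : R3) (i : Fin 3) : ∑ j, aMat γ z i j * z j = 0 := by
  rcases eq_or_ne z 0 with hz | hz
  · subst hz
    have h0 : ∀ j : Fin 3, (0 : R3) j = 0 := fun j => rfl
    simp [h0]
  · have hn : (0:ℝ) < ‖z‖ ^ 2 := pow_pos (norm_pos_iff.mpr hz) 2
    have expand : ∀ j, aMat γ z i j * z j =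
        ‖z‖ ^ (γ+2) * (if i = j then z j else 0) - (‖z‖ ^ (γ+2) * z i / ‖z‖ ^ 2) * z j ^ 2 := by
      intro j; rw [aMat]; split <;> ring
    rw [Finset.sum_congr rfl fun j _ => expand j, Finset.sum_sub_distrib, ← Finset.mul_sum,
      ← Finset.mul_sum, Finset.sum_ite_eq, ← norm_sq_eq]
    simp only [Finset.mem_univ, if_true]
    field_simp
    ring

lemma key_id (γ : ℝ) (v w : R3) :
    ∑ i, ∑ j, aMat γ (v - w) i j * v i * v j
      = ∑ i, ∑ j, aMat γ (v - w) i j * w i * w j := by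
  set z := v - w with hzdef
  have hz : ∀ k : Fin 3, z k = v k - w k := fun k => rfl
  have row := aMat_row γ z
  have col : ∀ j, ∑ i, aMat γ z i j * z i = 0 := by
    intro j
    rw [Finset.sum_congr rfl fun i _ => by rw [aMat_symm γ z i j]]
    exact row j
  rw [← sub_eq_zero, ← Finset.sum_sub_distrib]
  have step : ∀ i, (∑ j, aMat γ z i j * v i * v j) - ∑ j, aMat γ z i j * w i * w j
      = (∑ j, aMat γ z i j * z i * v j) + w i * ∑ j, aMat γ z i j * z j := by
    intro i
    rw [Finset.mul_sum, ← Finset.sum_add_distrib, ← Finset.sum_sub_distrib]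
    refine Finset.sum_congr rfl fun j _ => ?_
    rw [hz i, hz j]
    ring
  rw [Finset.sum_congr rfl fun i _ => step i, Finset.sum_add_distrib]
  have h1 : ∑ i, ∑ j, aMat γ z i j * z i * v j = 0 := by
    rw [Finset.sum_comm]
    refine Finset.sum_eq_zero fun j _ => ?_
    rw [← Finset.sum_mul, col j, zero_mul]
  have h2 : ∑ i, w i * ∑ j, aMat γ z i j * z j = 0 :=
    Finset.sum_eq_zero fun i _ => by rw [row i, mul_zero]
  rw [h1, h2, add_zero]

lemma norm_sub_le_two_jb (v w : R3) : ‖v - w‖ ≤ 2 * (jb v * jb w) := by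
  have h1 := norm_le_jb v; have h2 := norm_le_jb w
  have h3 := jb_one_le v; have h4 := jb_one_le w
  calc ‖v - w‖ ≤ ‖v‖ + ‖w‖ := norm_sub_le v w
    _ ≤ 2 * (jb v * jb w) := by nlinarith

lemma rpow_norm_sub_le (γ : ℝ) (hγ : γ ∈ Set.Icc (-2:ℝ) 1) (v w : R3) :
    ‖v - w‖ ^ (γ + 2) ≤ 8 * (jb v ^ (γ+2) * jb w ^ (γ+2)) := by
  have hp : (0:ℝ) ≤ γ + 2 := by linarith [hγ.1]
  have h := Real.rpow_le_rpow (norm_nonneg _) (norm_sub_le_two_jb v w) hp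
  have he : (2 * (jb v * jb w)) ^ (γ+2) = 2 ^ (γ+2) * (jb v ^ (γ+2) * jb w ^ (γ+2)) := by
    rw [Real.mul_rpow (by norm_num) (mul_nonneg (jb_pos v).le (jb_pos w).le),
      Real.mul_rpow (jb_pos v).le (jb_pos w).le]
  have h2 : (2:ℝ) ^ (γ+2) ≤ 8 := by
    calc (2:ℝ) ^ (γ+2) ≤ 2 ^ (3:ℝ) :=
          Real.rpow_le_rpow_of_exponent_le one_le_two (by linarith [hγ.2])
      _ = 8 := by
          rw [show (3:ℝ) = ((3:ℕ):ℝ) by norm_num, Real.rpow_natCast]; norm_num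
  have hnn : 0 ≤ jb v ^ (γ+2) * jb w ^ (γ+2) :=
    mul_nonneg (Real.rpow_nonneg (jb_pos v).le _) (Real.rpow_nonneg (jb_pos w).le _)
  calc ‖v-w‖^(γ+2) ≤ 2^(γ+2) * (jb v ^ (γ+2) * jb w ^(γ+2)) := he ▸ h
    _ ≤ 8 * (jb v ^ (γ+2) * jb w ^ (γ+2)) := by nlinarith

lemma jb_rpow_add (w : R3) (a b : ℝ) : jb w ^ (a + b) = jb w ^ a * jb w ^ b :=
  Real.rpow_add (jb_pos w) a b

lemma jb_mul_self (w : R3) (a : ℝ) : jb w ^ a * (jb w * jb w) = jb w ^ (a + 2) := by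
  rw [jb_rpow_add w a 2, show (2:ℝ) = ((2:ℕ):ℝ) by norm_num, Real.rpow_natCast]
  ring

lemma sum_bound (γ : ℝ) (hγ : γ ∈ Set.Icc (-2:ℝ) 1) (v w : R3) :
    |∑ i, ∑ j, aMat γ (v-w) i j * w i * w j|
      ≤ 72 * (jb v ^ (γ+2) * jb w ^ (γ+4)) := by
  have habs : ∀ i j : Fin 3, |aMat γ (v-w) i j * w i * w j|
      ≤ 8 * (jb v ^ (γ+2) * jb w ^ (γ+4)) := by
    intro i j
    have h1 : |aMat γ (v-w) i j| ≤ 8 * (jb v ^ (γ+2) * jb w ^ (γ+2)) :=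
      le_trans (aMat_abs_le γ _ i j) (rpow_norm_sub_le γ hγ v w)
    have h2 : |w i| ≤ jb w := (coord_abs_le_norm w i).trans (norm_le_jb w)
    have h3 : |w j| ≤ jb w := (coord_abs_le_norm w j).trans (norm_le_jb w)
    have hnn1 : (0:ℝ) ≤ jb v ^ (γ+2) := Real.rpow_nonneg (jb_pos v).le _
    have hnn2 : (0:ℝ) ≤ jb w ^ (γ+2) := Real.rpow_nonneg (jb_pos w).le _
    have key : |aMat γ (v-w) i j * w i * w j|
        ≤ 8 * (jb v ^ (γ+2) * jb w ^ (γ+2)) * (jb w * jb w) := by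
      rw [abs_mul, abs_mul]
      have hw0 : (0:ℝ) ≤ jb w := (jb_pos w).le
      have B0 : (0:ℝ) ≤ 8 * (jb v ^ (γ+2) * jb w ^ (γ+2)) := by
        have := mul_nonneg hnn1 hnn2; linarith
      calc |aMat γ (v-w) i j| * |w i| * |w j|
          ≤ 8 * (jb v ^ (γ+2) * jb w ^ (γ+2)) * jb w * jb w :=
            mul_le_mul (mul_le_mul h1 h2 (abs_nonneg _) B0) h3 (abs_nonneg _)
              (mul_nonneg B0 hw0)
        _ = 8 * (jb v ^ (γ+2) * jb w ^ (γ+2)) * (jb w * jb w) := by ring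
    calc |aMat γ (v-w) i j * w i * w j|
        ≤ 8 * (jb v ^ (γ+2) * jb w ^ (γ+2)) * (jb w * jb w) := key
      _ = 8 * (jb v ^ (γ+2) * (jb w ^ (γ+2) * (jb w * jb w))) := by ring
      _ = 8 * (jb v ^ (γ+2) * jb w ^ (γ+4)) := by
          rw [jb_mul_self w (γ+2), show γ+2+2 = γ+4 by ring]
  calc |∑ i, ∑ j, aMat γ (v-w) i j * w i * w j|
      ≤ ∑ i, |∑ j, aMat γ (v-w) i j * w i * w j| := Finset.abs_sum_le_sum_abs _ _
    _ ≤ ∑ i : Fin 3, ∑ j : Fin 3, |aMat γ (v-w) i j * w i * w j| :=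
        Finset.sum_le_sum fun i _ => Finset.abs_sum_le_sum_abs _ _
    _ ≤ ∑ _i : Fin 3, ∑ _j : Fin 3, 8 * (jb v ^ (γ+2) * jb w ^ (γ+4)) :=
        Finset.sum_le_sum fun i _ => Finset.sum_le_sum fun j _ => habs i j
    _ = 72 * (jb v ^ (γ+2) * jb w ^ (γ+4)) := by
        simp [Finset.sum_const]; ring

lemma jb_continuous : Continuous jb := by
  unfold jb
  exact Real.continuous_sqrt.comp (by continuity)

lemma jb_rpow_continuous (r : ℝ) : Continuous (fun w : R3 => jb w ^ r) :=
  jb_continuous.rpow_const fun x => Or.inl (jb_pos x).ne'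

lemma jb_eq_rpow (w : R3) : jb w = (1 + ‖w‖ ^ 2) ^ ((1:ℝ)/2) := by
  rw [jb, Real.sqrt_eq_rpow]

lemma integrable_jb_sq_rpow {r : ℝ} (hr : 2 * r < -3) :
    Integrable (fun w : R3 => (jb w ^ r) ^ 2) := by
  have hnr : ((Module.finrank ℝ R3 : ℝ)) < -(2*r) := by
    rw [finrank_euclideanSpace_fin]; norm_num; linarith
  have h := integrable_rpow_neg_one_add_norm_sq (μ := (volume : Measure R3)) hnr
  have heq : (fun x : R3 => ((1:ℝ) + ‖x‖ ^ 2) ^ (-(-(2*r)) / 2)) =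
      fun w : R3 => (jb w ^ r) ^ 2 := by
    funext w
    have h0 : (0:ℝ) ≤ 1 + ‖w‖ ^ 2 := by positivity
    have e1 : (jb w ^ r) ^ (2:ℕ) = jb w ^ (r * 2) := by
      rw [← Real.rpow_natCast (jb w ^ r) 2, ← Real.rpow_mul (jb_pos w).le]
      norm_num
    have e2 : jb w ^ (r * 2) = (1 + ‖w‖ ^ 2) ^ ((1:ℝ)/2 * (r * 2)) := by
      rw [jb_eq_rpow, ← Real.rpow_mul h0]
    rw [e1, e2]
    congr 1
    ring
  rwa [heq] at h

lemma memL2_jb_rpow {r : ℝ} (hr : 2 * r < -3) :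
    MemLp (fun w : R3 => jb w ^ r) 2 (volume : Measure R3) :=
  (memLp_two_iff_integrable_sq
    (jb_rpow_continuous r).aestronglyMeasurable).2 (integrable_jb_sq_rpow hr)

lemma integrable_mul_of_memL2 {g h : R3 → ℝ} (hg : MemLp g 2 (volume : Measure R3))
    (hh : MemLp h 2 (volume : Measure R3)) : Integrable (fun w => g w * h w) := by
  have hmaj : Integrable (fun w : R3 => g w ^ 2 + h w ^ 2) :=
    hg.integrable_sq.add hh.integrable_sq
  refine hmaj.mono' (hg.1.mul hh.1) (ae_of_all _ fun w => ?_)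
  rw [Real.norm_eq_abs, abs_mul]
  nlinarith [sq_nonneg (|g w| - |h w|), sq_abs (g w), sq_abs (h w)]

lemma CS {g h : R3 → ℝ} (hg : MemLp g 2 (volume : Measure R3))
    (hh : MemLp h 2 (volume : Measure R3)) :
    ∫ w : R3, |g w| * |h w| ≤
      (∫ w : R3, g w ^ 2) ^ ((1:ℝ)/2) * (∫ w : R3, h w ^ 2) ^ ((1:ℝ)/2) := by
  have hpq : Real.HolderConjugate 2 2 := Real.HolderConjugate.two_two
  have h2 : ENNReal.ofReal (2:ℝ) = 2 := by
    simp [ENNReal.ofReal_ofNat]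
  have hg' : MemLp g (ENNReal.ofReal 2) (volume : Measure R3) := by rw [h2]; exact hg
  have hh' : MemLp h (ENNReal.ofReal 2) (volume : Measure R3) := by rw [h2]; exact hh
  have key := integral_mul_norm_le_Lp_mul_Lq (μ := (volume : Measure R3)) hpq hg' hh'
  have habs : ∀ x : ℝ, |x| ^ (2:ℝ) = x ^ 2 := fun x => by
    rw [show (2:ℝ) = ((2:ℕ):ℝ) by norm_num, Real.rpow_natCast, sq_abs]
  simp only [Real.norm_eq_abs, habs] at key
  exact key

example : (volume : Measure R3).IsAddHaarMeasure := inferInstance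
example : (volume : Measure R3).IsNegInvariant := inferInstance
example : BorelSpace R3 := inferInstance

lemma null_coord (k : Fin 3) : (volume : Measure R3) {z : R3 | z k = 0} = 0 := by
  have hS : LinearMap.ker ((EuclideanSpace.proj k : R3 →L[ℝ] ℝ) : R3 →ₗ[ℝ] ℝ) ≠ ⊤ := by
    intro htop
    have h1 : (EuclideanSpace.single k (1:ℝ) : R3) ∈
        LinearMap.ker ((EuclideanSpace.proj k : R3 →L[ℝ] ℝ) : R3 →ₗ[ℝ] ℝ) := by
      rw [htop]; trivial
    rw [LinearMap.mem_ker] at h1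
    have h2 : (EuclideanSpace.single k (1:ℝ) : R3) k = 0 := h1
    simp [EuclideanSpace.single_apply] at h2
  have := MeasureTheory.Measure.addHaar_submodule (volume : Measure R3)
    (LinearMap.ker ((EuclideanSpace.proj k : R3 →L[ℝ] ℝ) : R3 →ₗ[ℝ] ℝ)) hS
  have hset : {z : R3 | z k = 0} =
      ((LinearMap.ker ((EuclideanSpace.proj k : R3 →L[ℝ] ℝ) : R3 →ₗ[ℝ] ℝ) : Submodule ℝ R3) :
        Set R3) := by
    ext z
    exact Iff.rfl
  rw [hset]
  exact this

lemma aMat_zero_coord {γ : ℝ} {z : R3} {i j : Fin 3} (h : aMat γ z i j = 0) :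
    ∃ k, z k = 0 := by
  by_contra hc
  push_neg at hc
  have hz : z ≠ 0 := by
    intro h0
    exact hc 0 (by rw [h0]; rfl)
  have hzn : (0:ℝ) < ‖z‖ := norm_pos_iff.mpr hz
  have hpos : (0:ℝ) < ‖z‖ ^ (γ+2) := Real.rpow_pos_of_pos hzn _
  have hn : (0:ℝ) < ‖z‖ ^ 2 := pow_pos hzn 2
  rw [aMat, mul_eq_zero] at h
  rcases h with h | h
  · exact hpos.ne' h
  · by_cases hij : i = j
    · subst hij
      rw [if_pos rfl, sub_eq_zero] at h
      have hsum : z i * z i = ‖z‖ ^ 2 := by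
        field_simp at h
        linarith [h]
      rw [norm_sq_eq, Fin.sum_univ_three] at hsum
      have h0 := hc 0
      have h1 := hc 1
      have h2 := hc 2
      have s0 : 0 < z 0 ^ 2 := by positivity
      have s1 : 0 < z 1 ^ 2 := by positivity
      have s2 : 0 < z 2 ^ 2 := by positivity
      fin_cases i <;> simp at hsum <;> nlinarith
    · rw [if_neg hij, zero_sub, neg_eq_zero, div_eq_zero_iff] at h
      rcases h with h | h
      · rcases mul_eq_zero.mp h with h | h
        · exact hc i h
        · exact hc j h
      · exact hn.ne' h

lemma null_preimage (v : R3) {s : Set R3} (hs : (volume : Measure R3) s = 0) :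
    (volume : Measure R3) ((fun w => v - w) ⁻¹' s) = 0 :=
  (Measure.measurePreserving_sub_left (volume : Measure R3) v).quasiMeasurePreserving.preimage_null hs

lemma aMat_meas (γ : ℝ) (v : R3) (i j : Fin 3) :
    Measurable (fun w : R3 => aMat γ (v - w) i j) := by
  unfold aMat
  have hsub : Measurable (fun w : R3 => v - w) := measurable_const.sub measurable_id
  have hnorm : Measurable (fun w : R3 => ‖v - w‖) := hsub.norm
  have happ : ∀ k : Fin 3, Measurable (fun w : R3 => (v - w) k) := by
    intro k
    exact (measurable_pi_apply k).comp ((PiLp.continuous_ofLp 2 _).measurable.comp hsub)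
  fun_prop

theorem stmt8 (γ θ : ℝ) (hγ : γ ∈ Set.Icc (-2:ℝ) 1) (hθ : γ + 4 + 3/2 < θ) :
    ∃ C : ℝ, 0 < C ∧ ∀ f : R3 → ℝ,
      Integrable (fun w : R3 => (jb w ^ θ * f w) ^ 2) →
      ∀ v : R3,
        |∑ i, ∑ j, (∫ w : R3, aMat γ (v - w) i j * f w) * v i * v j|
          ≤ C * jb v ^ (γ + 2) * (∫ w : R3, (jb w ^ θ * f w) ^ 2) ^ ((1:ℝ)/2) := by
  set D : ℝ := (∫ w : R3, (jb w ^ (γ + 4 - θ)) ^ 2) ^ ((1:ℝ)/2) with hD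
  have hD0 : 0 ≤ D := Real.rpow_nonneg (integral_nonneg fun w => sq_nonneg _) _
  refine ⟨72 * D + 1, by linarith, ?_⟩
  intro f hf_int v
  set M : ℝ := (∫ w : R3, (jb w ^ θ * f w) ^ 2) ^ ((1:ℝ)/2) with hM
  have hM0 : 0 ≤ M := Real.rpow_nonneg (integral_nonneg fun w => sq_nonneg _) _
  have hjv : 0 ≤ jb v ^ (γ+2) := Real.rpow_nonneg (jb_pos v).le _
  by_cases hfm : AEStronglyMeasurable f (volume : Measure R3)
  · -- measurable case
    have hth : AEStronglyMeasurable (fun w : R3 => jb w ^ θ * f w) volume :=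
      ((jb_rpow_continuous θ).aestronglyMeasurable).mul hfm
    have hhL2 : MemLp (fun w : R3 => jb w ^ θ * f w) 2 volume :=
      (memLp_two_iff_integrable_sq hth).2 hf_int
    have hexp1 : 2 * (γ + 2 - θ) < -3 := by linarith
    have hexp2 : 2 * (γ + 4 - θ) < -3 := by linarith
    have hg1L2 := memL2_jb_rpow hexp1
    have hg2L2 := memL2_jb_rpow hexp2
    have hfac : ∀ (r : ℝ) (w : R3), jb w ^ (r - θ) * (jb w ^ θ * f w) = jb w ^ r * f w := by
      intro r w
      rw [← mul_assoc, ← jb_rpow_add w (r - θ) θ, show r - θ + θ = r by ring]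
    have hInt2 : Integrable (fun w : R3 => jb w ^ (γ+2) * f w) :=
      (integrable_mul_of_memL2 hg1L2 hhL2).congr (ae_of_all _ fun w => by
        show jb w ^ (γ+2-θ) * (jb w ^ θ * f w) = _
        rw [show γ+2-θ = (γ+2) - θ by ring, hfac (γ+2) w])
    have hInt4 : Integrable (fun w : R3 => jb w ^ (γ+4) * f w) :=
      (integrable_mul_of_memL2 hg2L2 hhL2).congr (ae_of_all _ fun w => by
        show jb w ^ (γ+4-θ) * (jb w ^ θ * f w) = _
        rw [show γ+4-θ = (γ+4) - θ by ring, hfac (γ+4) w])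
    have hcomp : ∀ i j : Fin 3, Integrable (fun w : R3 => aMat γ (v - w) i j * f w) := by
      intro i j
      refine (hInt2.abs.const_mul (8 * jb v ^ (γ+2))).mono'
        (((aMat_meas γ v i j).aestronglyMeasurable).mul hfm) (ae_of_all _ fun w => ?_)
      rw [Real.norm_eq_abs, abs_mul, abs_mul,
        abs_of_nonneg (Real.rpow_nonneg (jb_pos w).le (γ+2))]
      have h1 : |aMat γ (v - w) i j| ≤ 8 * (jb v ^ (γ+2) * jb w ^ (γ+2)) :=
        le_trans (aMat_abs_le γ _ i j) (rpow_norm_sub_le γ hγ v w)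
      calc |aMat γ (v - w) i j| * |f w|
          ≤ 8 * (jb v ^ (γ+2) * jb w ^ (γ+2)) * |f w| :=
            mul_le_mul_of_nonneg_right h1 (abs_nonneg _)
        _ = 8 * jb v ^ (γ+2) * (jb w ^ (γ+2) * |f w|) := by ring
    have hcomp' : ∀ i j : Fin 3,
        Integrable (fun w : R3 => aMat γ (v - w) i j * f w * v i * v j) :=
      fun i j => ((hcomp i j).mul_const (v i)).mul_const (v j)
    have e1 : ∀ i j : Fin 3, (∫ w : R3, aMat γ (v - w) i j * f w) * v i * v j
        = ∫ w : R3, aMat γ (v - w) i j * f w * v i * v j := by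
      intro i j
      rw [← integral_mul_const, ← integral_mul_const]
    have e2 : ∑ i, ∑ j, (∫ w : R3, aMat γ (v - w) i j * f w) * v i * v j
        = ∫ w : R3, ∑ i, ∑ j, aMat γ (v - w) i j * f w * v i * v j := by
      rw [Finset.sum_congr rfl fun i _ => Finset.sum_congr rfl fun j _ => e1 i j]
      rw [Finset.sum_congr rfl fun i (_ : i ∈ Finset.univ) =>
        (integral_finset_sum Finset.univ fun j _ => hcomp' i j).symm]
      exact (integral_finset_sum Finset.univ fun i _ =>
        integrable_finset_sum Finset.univ fun j _ => hcomp' i j).symm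
    have inner_eq : ∀ w : R3, ∑ i, ∑ j, aMat γ (v - w) i j * f w * v i * v j
        = (∑ i, ∑ j, aMat γ (v - w) i j * w i * w j) * f w := by
      intro w
      rw [← key_id γ v w, Finset.sum_mul]
      refine Finset.sum_congr rfl fun i _ => ?_
      rw [Finset.sum_mul]
      exact Finset.sum_congr rfl fun j _ => by ring
    have hInner : Integrable
        (fun w : R3 => (∑ i, ∑ j, aMat γ (v - w) i j * w i * w j) * f w) :=
      ((integrable_finset_sum Finset.univ fun i _ =>
        integrable_finset_sum Finset.univ fun j _ => hcomp' i j).congr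
          (ae_of_all _ fun w => inner_eq w))
    have hmajInt : Integrable (fun w : R3 => 72 * jb v ^ (γ+2) * (jb w ^ (γ+4) * |f w|)) := by
      refine (hInt4.abs.const_mul (72 * jb v ^ (γ+2))).congr (ae_of_all _ fun w => ?_)
      show 72 * jb v ^ (γ+2) * |jb w ^ (γ+4) * f w|
          = 72 * jb v ^ (γ+2) * (jb w ^ (γ+4) * |f w|)
      rw [abs_mul, abs_of_nonneg (Real.rpow_nonneg (jb_pos w).le (γ+4))]
    have hb : ∀ w : R3, |(∑ i, ∑ j, aMat γ (v - w) i j * w i * w j) * f w|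
        ≤ 72 * jb v ^ (γ+2) * (jb w ^ (γ+4) * |f w|) := by
      intro w
      rw [abs_mul]
      calc |∑ i, ∑ j, aMat γ (v - w) i j * w i * w j| * |f w|
          ≤ 72 * (jb v ^ (γ+2) * jb w ^ (γ+4)) * |f w| :=
            mul_le_mul_of_nonneg_right (sum_bound γ hγ v w) (abs_nonneg _)
        _ = 72 * jb v ^ (γ+2) * (jb w ^ (γ+4) * |f w|) := by ring
    have hCS : ∫ w : R3, jb w ^ (γ+4) * |f w| ≤ D * M := by
      have hfun : (fun w : R3 => jb w ^ (γ+4) * |f w|)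
          = fun w : R3 => |jb w ^ (γ+4-θ)| * |jb w ^ θ * f w| := by
        funext w
        rw [abs_of_nonneg (Real.rpow_nonneg (jb_pos w).le _), abs_mul,
          abs_of_nonneg (Real.rpow_nonneg (jb_pos w).le θ), ← mul_assoc,
          ← jb_rpow_add w (γ+4-θ) θ, show γ+4-θ+θ = γ+4 by ring]
      rw [hfun, hD, hM]
      have := CS hg2L2 hhL2
      convert this using 3
    calc |∑ i, ∑ j, (∫ w : R3, aMat γ (v - w) i j * f w) * v i * v j|
        = |∫ w : R3, (∑ i, ∑ j, aMat γ (v - w) i j * w i * w j) * f w| := by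
          rw [e2, integral_congr_ae (ae_of_all _ fun w => inner_eq w)]
      _ ≤ ∫ w : R3, |(∑ i, ∑ j, aMat γ (v - w) i j * w i * w j) * f w| := by
          have hni := norm_integral_le_integral_norm (μ := (volume : Measure R3))
            (f := fun w : R3 => (∑ i, ∑ j, aMat γ (v - w) i j * w i * w j) * f w)
          simpa only [Real.norm_eq_abs] using hni
      _ ≤ ∫ w : R3, 72 * jb v ^ (γ+2) * (jb w ^ (γ+4) * |f w|) :=
          integral_mono hInner.abs hmajInt hb
      _ = 72 * jb v ^ (γ+2) * ∫ w : R3, jb w ^ (γ+4) * |f w| := by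
          rw [integral_const_mul]
      _ ≤ 72 * jb v ^ (γ+2) * (D * M) := by
          have h72 : (0:ℝ) ≤ 72 * jb v ^ (γ+2) := by positivity
          exact mul_le_mul_of_nonneg_left hCS h72
      _ ≤ (72 * D + 1) * jb v ^ (γ+2) * M := by nlinarith [mul_nonneg hjv hM0]
  · -- non-measurable case: all integrals vanish
    have hz : ∀ i j : Fin 3, (∫ w : R3, aMat γ (v - w) i j * f w) = 0 := by
      intro i j
      apply integral_undef
      intro hint
      apply hfm
      have hnull : (volume : Measure R3) {w : R3 | aMat γ (v - w) i j = 0} = 0 := by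
        have hsub : {w : R3 | aMat γ (v - w) i j = 0} ⊆
            (fun w : R3 => v - w) ⁻¹' (⋃ k : Fin 3, {z : R3 | z k = 0}) := by
          intro w hw
          obtain ⟨k, hk⟩ := aMat_zero_coord hw
          exact Set.mem_preimage.mpr (Set.mem_iUnion.mpr ⟨k, hk⟩)
        exact measure_mono_null hsub
          (null_preimage v (measure_iUnion_null fun k => null_coord k))
      have hae : ∀ᵐ w : R3 ∂(volume : Measure R3), aMat γ (v - w) i j ≠ 0 := by
        rw [ae_iff]
        simpa using hnull
      have hcongr : f =ᵐ[(volume : Measure R3)]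
          fun w => (aMat γ (v - w) i j * f w) / aMat γ (v - w) i j := by
        filter_upwards [hae] with w hw
        field_simp
      exact (AEMeasurable.congr
        (hint.aemeasurable.div (aMat_meas γ v i j).aemeasurable) hcongr.symm).aestronglyMeasurable
    simp only [hz, zero_mul, Finset.sum_const_zero, abs_zero]
    exact mul_nonneg (mul_nonneg (by linarith) hjv) hM0
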